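/- Let h and k be coprime integers with k > 0 and h > 0, and let q be a positive integer. Then S(qh, qk) equals S(h,k) if h + k is odd and q is odd; equals 1 if h + k is odd and q is even; and equals -(q-1) if both h and k are odd. -/

import Mathlib

/-- `S(h,k) := ∑_{j=1}^{k-1} (-1)^{j+1+⌊hj/k⌋}`. -/
def Spair (h k : ℕ) : ℤ := ∑ j ∈ Finset.Icc 1 (k - 1), (-1 : ℤ) ^ (j + 1 + h * j / k)

open Finset

private lemma fdiv_period (h k j q : ℕ) (hk : 0 < k) :
    h * (j + q * k) / k = h * j / k + h * q := by
  rw [Nat.mul_add, show h * (q * k) = h * q * k by ring, Nat.add_mul_div_right _ _ hk]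

private lemma f_period (h k j q : ℕ) (hk : 0 < k) :
    (-1 : ℤ) ^ ((j + q * k) + 1 + h * (j + q * k) / k)
      = (-1 : ℤ) ^ (j + 1 + h * j / k) * ((-1 : ℤ) ^ (h + k)) ^ q := by
  rw [fdiv_period h k j q hk, ← pow_mul, ← pow_add]
  congr 1
  ring

private lemma block_sum (h k : ℕ) (hk : 0 < k) (q : ℕ) :
    ∑ j ∈ range (q * k), (-1 : ℤ) ^ (j + 1 + h * j / k)
      = (∑ i ∈ range q, ((-1 : ℤ) ^ (h + k)) ^ i)
        * (∑ j ∈ range k, (-1 : ℤ) ^ (j + 1 + h * j / k)) := by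
  induction q with
  | zero => simp
  | succ q ih =>
    rw [range_eq_Ico, show (q + 1) * k = q * k + k by ring,
      ← Finset.sum_Ico_consecutive _ (Nat.zero_le (q * k)) (Nat.le_add_right _ _)]
    have h2 : ∑ i ∈ Ico (q * k) (q * k + k), (-1 : ℤ) ^ (i + 1 + h * i / k)
        = (∑ j ∈ range k, (-1 : ℤ) ^ (j + 1 + h * j / k)) * ((-1 : ℤ) ^ (h + k)) ^ q := by
      rw [Finset.sum_Ico_eq_sum_range, Nat.add_sub_cancel_left, Finset.sum_mul]
      refine Finset.sum_congr rfl fun i _ => ?_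
      rw [show q * k + i = i + q * k by ring, f_period h k i q hk]
    rw [h2, ← range_eq_Ico, ih, Finset.sum_range_succ]
    ring

private lemma neg_pow_add_eq_zero {a b : ℕ} (hab : Odd (a + b)) :
    (-1 : ℤ) ^ a + (-1 : ℤ) ^ b = 0 := by
  rcases Nat.even_or_odd a with ha | ha
  · have hb : Odd b := by
      rcases ha with ⟨m, hm⟩; rcases hab with ⟨n, hn⟩; exact ⟨n - m, by omega⟩
    rw [ha.neg_one_pow, hb.neg_one_pow]; ring
  · have hb : Even b := by
      rcases ha with ⟨m, hm⟩; rcases hab with ⟨n, hn⟩; exact ⟨n - m, by omega⟩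
    rw [ha.neg_one_pow, hb.neg_one_pow]; ring

private lemma fdiv_reflect (h k j : ℕ) (hcop : Nat.Coprime h k)
    (h1 : 1 ≤ j) (h2 : j ≤ k - 1) (hk : 0 < k) :
    h * (k - j) / k = h - h * j / k - 1 ∧ h * j / k + 1 ≤ h := by
  set d := h * j / k with hd
  set r := h * j % k with hr
  have hdm : k * d + r = h * j := Nat.div_add_mod _ _
  have hrk : r < k := Nat.mod_lt _ hk
  have hr0 : r ≠ 0 := by
    intro h0
    have hdvd : k ∣ h * j := by omega
    have : k ∣ j := (Nat.Coprime.dvd_of_dvd_mul_left (hcop.symm) hdvd)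
    have := Nat.le_of_dvd (by omega) this
    omega
  have hjk : j < k := by omega
  have h0 : 0 < h := by
    rcases Nat.eq_zero_or_pos h with h0 | h0
    · exfalso; subst h0; simp at hdm; omega
    · exact h0
  have hdh : d + 1 ≤ h := by
    by_contra hcon
    push_neg at hcon
    have hle : h ≤ d := by omega
    have h1 : k * h ≤ k * d := Nat.mul_le_mul_left k hle
    have hhj : h * j < h * k := mul_lt_mul_of_pos_left hjk h0
    have hcm : h * k = k * h := Nat.mul_comm _ _
    omega
  refine ⟨?_, hdh⟩
  have key : h * (k - j) = k * (h - d - 1) + (k - r) := by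
    have e1 : h * (k - j) + h * j = h * k := by
      rw [← Nat.mul_add, Nat.sub_add_cancel (le_of_lt hjk)]
    have e2 : k * (h - d - 1) + k * (d + 1) = k * h := by
      rw [← Nat.mul_add]
      congr 1
      omega
    have e3 : h * k = k * h := Nat.mul_comm _ _
    have e4 : k * (d + 1) = k * d + k := by ring
    omega
  rw [key, Nat.mul_add_div hk, Nat.div_eq_of_lt (by omega)]
  omega

private lemma spair_odd_zero (h k : ℕ) (hh : Odd h) (hk : Odd k)
    (hcop : Nat.Coprime h k) : Spair h k = 0 := by
  have hk0 : 0 < k := hk.pos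
  unfold Spair
  apply Finset.sum_involution (fun j _ => k - j)
  · intro j hj
    simp only [Finset.mem_Icc] at hj
    obtain ⟨hrefl, hdle⟩ := fdiv_reflect h k j hcop hj.1 hj.2 hk0
    rw [hrefl]
    apply neg_pow_add_eq_zero
    have hjk : j ≤ k - 1 := hj.2
    have : (j + 1 + h * j / k) + ((k - j) + 1 + (h - h * j / k - 1)) = h + k + 1 := by
      omega
    rw [this]
    rcases hh with ⟨a, ha⟩
    rcases hk with ⟨b, hb⟩
    exact ⟨a + b + 1, by omega⟩
  · intro j hj _
    simp only [Finset.mem_Icc] at hj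
    intro hcon
    rcases hk with ⟨b, hb⟩
    omega
  · intro j hj
    simp only [Finset.mem_Icc] at hj ⊢
    omega
  · intro j hj
    simp only [Finset.mem_Icc] at hj
    omega

private lemma sum_Icc_eq_range (f : ℕ → ℤ) (n : ℕ) (hn : 0 < n) :
    ∑ j ∈ Finset.Icc 1 (n - 1), f j = ∑ j ∈ Finset.range n, f j - f 0 := by
  have hset : Finset.range n = insert 0 (Finset.Icc 1 (n - 1)) := by
    ext x
    simp only [Finset.mem_range, Finset.mem_insert, Finset.mem_Icc]
    omega
  rw [hset, Finset.sum_insert (by simp)]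
  ring

theorem stmt_14 (h k q : ℕ) (hh : 0 < h) (hk : 0 < k) (hq : 0 < q)
    (hcop : Nat.Coprime h k) :
    (Odd (h + k) → Odd q → Spair (q * h) (q * k) = Spair h k) ∧
    (Odd (h + k) → Even q → Spair (q * h) (q * k) = 1) ∧
    (Odd h → Odd k → Spair (q * h) (q * k) = -((q : ℤ) - 1)) := by
  have hqk : 0 < q * k := Nat.mul_pos hq hk
  -- rewrite Spair (q*h) (q*k) with simplified floors
  have hfl : ∀ j, q * h * j / (q * k) = h * j / k := by
    intro j
    rw [Nat.mul_assoc, Nat.mul_div_mul_left _ _ hq]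
  have hSp : Spair (q * h) (q * k)
      = ∑ j ∈ Finset.Icc 1 (q * k - 1), (-1 : ℤ) ^ (j + 1 + h * j / k) := by
    unfold Spair
    exact Finset.sum_congr rfl (fun j _ => by rw [hfl j])
  set T : ℤ := ∑ j ∈ Finset.range k, (-1 : ℤ) ^ (j + 1 + h * j / k) with hT
  have hSpq : Spair (q * h) (q * k)
      = (∑ i ∈ Finset.range q, ((-1 : ℤ) ^ (h + k)) ^ i) * T + 1 := by
    rw [hSp, sum_Icc_eq_range _ _ hqk, block_sum h k hk q]
    norm_num [hT]
  have hShk : Spair h k = T + 1 := by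
    unfold Spair
    rw [sum_Icc_eq_range _ _ hk]
    norm_num [hT]
  refine ⟨?_, ?_, ?_⟩
  · intro hodd hoq
    rw [hSpq, hShk, hodd.neg_one_pow, neg_one_geom_sum,
      if_neg (Nat.not_even_iff_odd.mpr hoq), one_mul]
  · intro hodd heq
    rw [hSpq, hodd.neg_one_pow, neg_one_geom_sum, if_pos heq, zero_mul, zero_add]
  · intro hho hko
    have heven : Even (h + k) := Odd.add_odd hho hko
    have hT0 : T = -1 := by
      have := spair_odd_zero h k hho hko hcop
      rw [hShk] at this
      linarith
    rw [hSpq, heven.neg_one_pow, hT0]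
    simp
    ring
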